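/- Let A be a unital C*-algebra, τ : A → ℂ a continuous linear functional that is tracial (τ(xy) = τ(yx)), positive (τ(x*x) is a nonnegative real), and faithful (τ(x*x) = 0 implies x = 0), and let δ : A → A be a continuous ℂ-linear *-derivation (δ(xy) = δ(x)y + xδ(y) and δ(x*) = (δ(x))*). Then for every projection p ∈ A (p = p* = p²): (i) τ( p·δ(p)·p·δ(p) ) = 0; (ii) τ( p²·δ(p)·δ(p) − p·δ(p)·p·δ(p) ) is a nonnegative real number, and it equals 0 if and only if δ(p)·p = 0. -/

import Mathlib

open ComplexOrder

/-- **Projections and the fourth-order Gauss–Bonnet coefficient.**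
Let `τ` be a continuous tracial, positive and faithful linear functional on a unital
C*-algebra and `δ` a continuous `ℂ`-linear *-derivation.  Then for every projection `p`:
(i) `τ(p·δ(p)·p·δ(p)) = 0`; (ii) `τ(p²·δ(p)·δ(p) − p·δ(p)·p·δ(p))` is a nonnegative real
number, and it vanishes iff `δ(p)·p = 0`. -/
theorem stmt_19 {A : Type*} [NormedRing A] [StarRing A] [CStarRing A]
    [NormedAlgebra ℂ A] [CompleteSpace A] [StarModule ℂ A]
    (τ : A →L[ℂ] ℂ) (hτ : ∀ x y : A, τ (x * y) = τ (y * x))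
    (hpos : ∀ x : A, 0 ≤ τ (star x * x))
    (hfaithful : ∀ x : A, τ (star x * x) = 0 → x = 0)
    (δ : A →L[ℂ] A) (hδ : ∀ x y : A, δ (x * y) = δ x * y + x * δ y)
    (hδstar : ∀ x : A, δ (star x) = star (δ x))
    (p : A) (hpstar : star p = p) (hpidem : p * p = p) :
    τ (p * δ p * p * δ p) = 0 ∧
    0 ≤ τ (p * p * δ p * δ p - p * δ p * p * δ p) ∧
    (τ (p * p * δ p * δ p - p * δ p * p * δ p) = 0 ↔ δ p * p = 0) := by
  have hsd : star (δ p) = δ p := by rw [← hδstar p, hpstar]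
  -- Leibniz: δ p = δ p * p + p * δ p
  have h1 : δ p = δ p * p + p * δ p := by
    have := hδ p p
    rwa [hpidem] at this
  -- p * δ p * p = 0
  have h0 : p * δ p * p = 0 := by
    have h2 : p * δ p * p = p * δ p * p + p * δ p * p := by
      calc p * δ p * p = p * (δ p * p + p * δ p) * p := by rw [← h1]
        _ = p * δ p * (p * p) + p * p * (δ p * p) := by noncomm_ring
        _ = p * δ p * p + p * δ p * p := by rw [hpidem]; noncomm_ring
    exact (left_eq_add.mp h2)
  have e1 : p * δ p * p * δ p = 0 := by rw [h0, zero_mul]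
  -- key: the quantity is τ(star x * x) with x = p * δ p
  have hτkey : τ (p * p * δ p * δ p - p * δ p * p * δ p)
      = τ (star (p * δ p) * (p * δ p)) := by
    rw [map_sub, e1, map_zero, sub_zero, hpidem]
    rw [hτ (p * δ p) (δ p)]
    congr 1
    rw [star_mul, hsd, hpstar]
    have : δ p * p * (p * δ p) = δ p * (p * p) * δ p := by noncomm_ring
    rw [this, hpidem, mul_assoc]
  refine ⟨by rw [e1, map_zero], ?_, ?_⟩
  · rw [hτkey]; exact hpos _
  · constructor
    · intro h
      have hx : p * δ p = 0 := hfaithful _ (by rw [← hτkey]; exact h)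
      have : δ p * p = star (p * δ p) := by rw [star_mul, hsd, hpstar]
      rw [this, hx, star_zero]
    · intro h
      have hx : p * δ p = 0 := by
        have := congrArg star h
        rwa [star_mul, hsd, hpstar, star_zero] at this
      rw [hτkey, hx, mul_zero, map_zero]
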